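/- Let d ≥ 1 and s ≥ 1 be integers and let v ∈ ℝ^d be nonzero. Let d_0 = #{i : r_i ∈ [0, 2^{−s}]} and, for j = 0, …, s−1, let d_{j+1} = #{i : r_i ∈ (2^{j−s}, 2^{j+1−s}]}. Then the nonuniform quantization of v with the NUQSGD levels L̂ satisfies E[‖Q_s(v) − v‖²] ≤ ‖v‖² · ( min{ 2^{−2s} d_0/4 , 2^{−s} √d_0 } + Σ_{j=0}^{s−1} min{ 2^{2(j−s)} d_{j+1}/4 , 2^{j−s} √d_{j+1} } ). -/

import Mathlib

open MeasureTheory Real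

noncomputable section

/-- The index of the quantization bin containing the normalized coordinate `r`. -/
def levIdx (l : ℕ → ℝ) (s : ℕ) (r : ℝ) : ℕ := sSup {j | j ≤ s ∧ l j ≤ r}

/-- The probability of rounding the normalized coordinate `r` up to the next level. -/
def quantP (l : ℕ → ℝ) (s : ℕ) (r : ℝ) : ℝ :=
  (r - l (levIdx l s r)) / (l (levIdx l s r + 1) - l (levIdx l s r))

/-- The (random) nonuniform quantization of `v`, driven by the uniform noise vector `u`:
coordinate `i` is `‖v‖ · sign vᵢ · hᵢ`, where `hᵢ` is the upper adjacent level with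
probability `p(rᵢ)` and the lower adjacent level otherwise. -/
def quant (l : ℕ → ℝ) (s : ℕ) {d : ℕ} (v : EuclideanSpace ℝ (Fin d))
    (u : Fin d → ℝ) : EuclideanSpace ℝ (Fin d) :=
  WithLp.toLp 2 fun i =>
    ‖v‖ * Real.sign (v i) *
      (if u i ≤ quantP l s (|v i| / ‖v‖)
       then l (levIdx l s (|v i| / ‖v‖) + 1)
       else l (levIdx l s (|v i| / ‖v‖)))

/-- The uniform probability measure on the cube `[0,1]^d`, driving the quantization noise. -/
def unifCube (d : ℕ) : Measure (Fin d → ℝ) :=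
  Measure.pi fun _ => volume.restrict (Set.Icc (0:ℝ) 1)

/-- `l` is a valid sequence of quantization levels `l 0 = 0 < l 1 < ⋯ < l (s+1) = 1`. -/
def IsLevels (l : ℕ → ℝ) (s : ℕ) : Prop :=
  l 0 = 0 ∧ l (s+1) = 1 ∧ ∀ j ≤ s, l j < l (j+1)

/-- The exponentially spaced NUQSGD levels `(0, 2^{-s}, 2^{1-s}, …, 2^{-1}, 1)`:
`l 0 = 0` and `l j = 2^{j-1-s}` for `j = 1, …, s+1`. -/
def nuqLevels (s : ℕ) : ℕ → ℝ :=
  fun j => if j = 0 then 0 else 2 ^ ((j : ℤ) - 1 - (s : ℤ))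

lemma nuqLevels_zero (s : ℕ) : nuqLevels s 0 = 0 := by simp [nuqLevels]

lemma nuqLevels_succ (s j : ℕ) : nuqLevels s (j+1) = 2 ^ ((j:ℤ) - (s:ℤ)) := by
  simp only [nuqLevels, Nat.succ_ne_zero, if_false]
  norm_num

lemma nuqLevels_nonneg (s j : ℕ) : 0 ≤ nuqLevels s j := by
  unfold nuqLevels; split
  · exact le_refl 0
  · positivity

lemma nuqLevels_strictMono (s : ℕ) : StrictMono (nuqLevels s) := by
  apply strictMono_nat_of_lt_succ
  intro n
  rcases Nat.eq_zero_or_pos n with h | h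
  · subst h; rw [nuqLevels_zero, nuqLevels_succ]; positivity
  · obtain ⟨m, rfl⟩ := Nat.exists_eq_succ_of_ne_zero h.ne'
    rw [nuqLevels_succ, nuqLevels_succ]
    exact zpow_lt_zpow_right₀ one_lt_two (by omega)

lemma nuqLevels_top (s : ℕ) : nuqLevels s (s+1) = 1 := by
  rw [nuqLevels_succ]; simp

lemma levIdx_basic (s : ℕ) {r : ℝ} (hr : 0 ≤ r) :
    levIdx (nuqLevels s) s r ≤ s ∧ nuqLevels s (levIdx (nuqLevels s) s r) ≤ r := by
  have h0 : (0:ℕ) ∈ {j | j ≤ s ∧ nuqLevels s j ≤ r} :=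
    ⟨Nat.zero_le s, by rw [nuqLevels_zero]; exact hr⟩
  exact Nat.sSup_mem ⟨0, h0⟩ ⟨s, fun m hm => hm.1⟩

lemma levIdx_upper (s : ℕ) {r : ℝ} (hr : 0 ≤ r) (hr1 : r ≤ 1) :
    r ≤ nuqLevels s (levIdx (nuqLevels s) s r + 1) := by
  rcases eq_or_lt_of_le (levIdx_basic s hr).1 with h | h
  · rw [h, nuqLevels_top]; exact hr1
  · by_contra hc
    push_neg at hc
    have h2 : levIdx (nuqLevels s) s r + 1 ≤ levIdx (nuqLevels s) s r :=
      le_csSup ⟨s, fun m hm => hm.1⟩ ⟨h, hc.le⟩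
    omega

lemma levIdx_eq (s k : ℕ) {r : ℝ} (hk : k ≤ s) (hlow : nuqLevels s k ≤ r)
    (hup : k = s ∨ r < nuqLevels s (k+1)) : levIdx (nuqLevels s) s r = k := by
  apply le_antisymm
  · have hne : Set.Nonempty {j | j ≤ s ∧ nuqLevels s j ≤ r} := ⟨k, hk, hlow⟩
    apply csSup_le hne
    rintro m ⟨hm1, hm2⟩
    by_contra hc
    push_neg at hc
    rcases hup with h | h
    · omega
    · have : nuqLevels s (k+1) ≤ nuqLevels s m := (nuqLevels_strictMono s).monotone (by omega)
      linarith
  · exact le_csSup ⟨s, fun m hm => hm.1⟩ ⟨hk, hlow⟩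


instance : IsProbabilityMeasure (volume.restrict (Set.Icc (0:ℝ) 1)) :=
  ⟨by rw [Measure.restrict_apply_univ, Real.volume_Icc]; norm_num⟩

instance (d : ℕ) : IsProbabilityMeasure (unifCube d) := by
  unfold unifCube; infer_instance

lemma unifCube_map_eval (d : ℕ) (i : Fin d) :
    (unifCube d).map (Function.eval i) = volume.restrict (Set.Icc (0:ℝ) 1) := by
  ext t ht
  rw [Measure.map_apply (measurable_pi_apply i) ht]
  rw [show Function.eval i ⁻¹' t
      = Set.pi Set.univ (Function.update (fun _ : Fin d => (Set.univ : Set ℝ)) i t)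
    from Set.eval_preimage]
  rw [unifCube, Measure.pi_pi]
  rw [Finset.prod_eq_single i (fun j _ hj => by
      rw [Function.update_of_ne hj]; exact measure_univ) (by simp)]
  rw [Function.update_self]

lemma integral_eval (d : ℕ) (i : Fin d) {F : ℝ → ℝ} (hF : Measurable F) :
    ∫ u, F (u i) ∂(unifCube d) = ∫ x in Set.Icc (0:ℝ) 1, F x := by
  rw [← unifCube_map_eval d i,
    integral_map (measurable_pi_apply i).aemeasurable hF.aestronglyMeasurable]

lemma integrable_ite_eval (d : ℕ) (i : Fin d) (p A B : ℝ) :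
    Integrable (fun u : Fin d → ℝ => if u i ≤ p then A else B) (unifCube d) := by
  have h : (fun u : Fin d → ℝ => if u i ≤ p then A else B)
      = fun u => Set.indicator {u : Fin d → ℝ | u i ≤ p} (fun _ => A - B) u + B := by
    funext u; by_cases h : u i ≤ p <;> simp [h]
  rw [h]
  exact ((integrable_const _).indicator
    (measurableSet_le (measurable_pi_apply i) measurable_const)).add (integrable_const _)

lemma integral_ite (p A B : ℝ) (hp0 : 0 ≤ p) (hp1 : p ≤ 1) :
    ∫ x in Set.Icc (0:ℝ) 1, (if x ≤ p then A else B) = p * A + (1 - p) * B := by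
  have hsplit : Set.Icc (0:ℝ) 1 = Set.Icc 0 p ∪ Set.Ioc p 1 := (Set.Icc_union_Ioc_eq_Icc hp0 hp1).symm
  have hdisj : Disjoint (Set.Icc (0:ℝ) p) (Set.Ioc p 1) := by
    rw [Set.disjoint_left]; rintro x ⟨_, h1⟩ ⟨h2, _⟩; linarith
  rw [hsplit, setIntegral_union hdisj measurableSet_Ioc]
  · have e1 : ∫ x in Set.Icc (0:ℝ) p, (if x ≤ p then A else B) = p * A := by
      rw [setIntegral_congr_fun measurableSet_Icc (g := fun _ => A)
        (fun x hx => if_pos hx.2)]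
      rw [setIntegral_const, measureReal_def, Real.volume_Icc, smul_eq_mul, sub_zero, ENNReal.toReal_ofReal hp0]
    have e2 : ∫ x in Set.Ioc p 1, (if x ≤ p then A else B) = (1 - p) * B := by
      rw [setIntegral_congr_fun measurableSet_Ioc (g := fun _ => B)
        (fun x hx => if_neg (not_le.mpr hx.1))]
      rw [setIntegral_const, measureReal_def, Real.volume_Ioc, smul_eq_mul,
        ENNReal.toReal_ofReal (by linarith)]
    rw [e1, e2]
  · exact ((integrableOn_const_iff (C := A)).mpr (Or.inr (by rw [Real.volume_Icc]; exact ENNReal.ofReal_lt_top))).congr_fun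
      (fun x hx => (if_pos hx.2).symm) measurableSet_Icc
  · exact ((integrableOn_const_iff (C := B)).mpr (Or.inr (by rw [Real.volume_Ioc]; exact ENNReal.ofReal_lt_top))).congr_fun
      (fun x hx => (if_neg (not_le.mpr hx.1)).symm) measurableSet_Ioc


lemma real_sign_mul_abs (x : ℝ) : Real.sign x * |x| = x := by
  rcases lt_trichotomy x 0 with h|h|h
  · rw [Real.sign_of_neg h, abs_of_neg h]; ring
  · simp [h]
  · rw [Real.sign_of_pos h, abs_of_pos h]; ring

lemma real_sign_sq {x : ℝ} (h : x ≠ 0) : Real.sign x ^ 2 = 1 := by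
  rcases Real.sign_apply_eq_of_ne_zero x h with h1 | h1 <;> rw [h1] <;> norm_num

lemma euclid_norm_sq {d : ℕ} (v : EuclideanSpace ℝ (Fin d)) : ‖v‖^2 = ∑ i, (v i)^2 := by
  rw [EuclideanSpace.norm_eq, Real.sq_sqrt (by positivity)]
  simp [Real.norm_eq_abs, sq_abs]

lemma euclid_abs_le {d : ℕ} (v : EuclideanSpace ℝ (Fin d)) (i : Fin d) : |v i| ≤ ‖v‖ := by
  have h1 : (v i)^2 ≤ ∑ j, (v j)^2 :=
    Finset.single_le_sum (f := fun j => (v j)^2) (fun j _ => sq_nonneg _) (Finset.mem_univ i)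
  nlinarith [abs_nonneg (v i), norm_nonneg v, sq_abs (v i), euclid_norm_sq v]


lemma coord_integral (s d : ℕ) (v : EuclideanSpace ℝ (Fin d)) (hv : v ≠ 0) (i : Fin d) :
    ∫ u, (quant (nuqLevels s) s v u i - v i)^2 ∂(unifCube d)
      = ‖v‖^2 * ((|v i| / ‖v‖ - nuqLevels s (levIdx (nuqLevels s) s (|v i| / ‖v‖)))
          * (nuqLevels s (levIdx (nuqLevels s) s (|v i| / ‖v‖) + 1) - |v i| / ‖v‖)) := by
  have hnv : 0 < ‖v‖ := norm_pos_iff.mpr hv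
  set l := nuqLevels s with hldef
  set r := |v i| / ‖v‖ with hrdef
  set k := levIdx l s r with hkdef
  have hr0 : 0 ≤ r := div_nonneg (abs_nonneg _) hnv.le
  have hr1 : r ≤ 1 := by rw [hrdef, div_le_one hnv]; exact euclid_abs_le v i
  have hks : k ≤ s := (levIdx_basic s hr0).1
  have hlk : l k ≤ r := (levIdx_basic s hr0).2
  have huk : r ≤ l (k+1) := levIdx_upper s hr0 hr1
  have hτ : 0 < l (k+1) - l k := sub_pos.mpr (nuqLevels_strictMono s (lt_add_one k))
  have hpdef : quantP l s r = (r - l k) / (l (k+1) - l k) := rfl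
  have hp0 : 0 ≤ quantP l s r := by rw [hpdef]; exact div_nonneg (by linarith) hτ.le
  have hp1 : quantP l s r ≤ 1 := by rw [hpdef, div_le_one hτ]; linarith
  have heq : (fun u : Fin d → ℝ => (quant l s v u i - v i)^2)
      = fun u => (fun x : ℝ => if x ≤ quantP l s r
            then (‖v‖ * Real.sign (v i) * l (k+1) - v i)^2
            else (‖v‖ * Real.sign (v i) * l k - v i)^2) (u i) := by
    funext u
    simp only [quant, ← hrdef, ← hkdef]
    by_cases h : u i ≤ quantP l s r <;> simp [h]
  rw [heq, integral_eval d i (F := fun x : ℝ => if x ≤ quantP l s r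
      then (‖v‖ * Real.sign (v i) * l (k+1) - v i)^2
      else (‖v‖ * Real.sign (v i) * l k - v i)^2)
    (Measurable.ite (measurableSet_le measurable_id measurable_const)
      measurable_const measurable_const), integral_ite _ _ _ hp0 hp1]
  rcases eq_or_ne (v i) 0 with h0 | h0
  · have hre : r = 0 := by rw [hrdef, h0]; simp
    have hlk0 : l k = 0 := le_antisymm (hre ▸ hlk) (nuqLevels_nonneg s k)
    rw [h0, hre, hlk0]
    simp [Real.sign_zero]
  · have hs2 : Real.sign (v i) ^ 2 = 1 := real_sign_sq h0
    have habs : |v i| = ‖v‖ * r := by rw [hrdef]; field_simp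
    have hvi : v i = Real.sign (v i) * (‖v‖ * r) := by
      rw [← habs, real_sign_mul_abs]
    have hA : (‖v‖ * Real.sign (v i) * l (k+1) - v i)^2 = ‖v‖^2 * (l (k+1) - r)^2 := by
      linear_combination ((v i) - Real.sign (v i)*‖v‖*r - 2*Real.sign (v i)*‖v‖*(l (k+1) - r)) * hvi
        + ‖v‖^2*(l (k+1) - r)^2 * hs2
    have hB : (‖v‖ * Real.sign (v i) * l k - v i)^2 = ‖v‖^2 * (l k - r)^2 := by
      linear_combination ((v i) - Real.sign (v i)*‖v‖*r - 2*Real.sign (v i)*‖v‖*(l k - r)) * hvi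
        + ‖v‖^2*(l k - r)^2 * hs2
    rw [hA, hB, hpdef]
    field_simp
    ring

lemma V_le_bin0 {s : ℕ} (hs : 1 ≤ s) {r : ℝ} (hr0 : 0 ≤ r) (hr : r ≤ 2^(-(s:ℤ))) :
    (r - nuqLevels s (levIdx (nuqLevels s) s r)) * (nuqLevels s (levIdx (nuqLevels s) s r + 1) - r)
      ≤ min (2^(-(s:ℤ)) * 2^(-(s:ℤ)) / 4) (2^(-(s:ℤ)) * r) := by
  have hl1 : nuqLevels s 1 = 2^(-(s:ℤ)) := by rw [nuqLevels_succ]; norm_num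
  have ha : (0:ℝ) < 2^(-(s:ℤ)) := by positivity
  rcases lt_or_eq_of_le hr with h | h
  · have hk : levIdx (nuqLevels s) s r = 0 :=
      levIdx_eq s 0 (Nat.zero_le s) (by rw [nuqLevels_zero]; exact hr0)
        (Or.inr (by rw [hl1]; exact h))
    rw [hk, nuqLevels_zero, hl1]
    exact le_min (by nlinarith [sq_nonneg (2^(-(s:ℤ)) - 2*r)]) (by nlinarith)
  · have hl2 : nuqLevels s 2 = 2^(1-(s:ℤ)) := by rw [nuqLevels_succ]; norm_num
    have hk : levIdx (nuqLevels s) s r = 1 :=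
      levIdx_eq s 1 hs (by rw [hl1, h]) (Or.inr (by
        rw [hl2, h]
        exact zpow_lt_zpow_right₀ one_lt_two (by omega)))
    rw [hk, hl1, ← h]
    have hz : (r - r) * (nuqLevels s (1+1) - r) = 0 := by ring
    rw [hz]
    have hrpos : 0 < r := by rw [h]; exact ha
    exact le_min (by positivity) (by positivity)

lemma V_le_bin {s j : ℕ} (hj : j < s) {r : ℝ} (h1 : 2^((j:ℤ)-(s:ℤ)) < r)
    (h2 : r ≤ 2^((j:ℤ)+1-(s:ℤ))) :
    (r - nuqLevels s (levIdx (nuqLevels s) s r)) * (nuqLevels s (levIdx (nuqLevels s) s r + 1) - r)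
      ≤ min (2^((j:ℤ)-(s:ℤ)) * 2^((j:ℤ)-(s:ℤ)) / 4) (2^((j:ℤ)-(s:ℤ)) * r) := by
  have hlj1 : nuqLevels s (j+1) = 2^((j:ℤ)-(s:ℤ)) := nuqLevels_succ s j
  have hlj2 : nuqLevels s (j+2) = 2^((j:ℤ)+1-(s:ℤ)) := by
    rw [show j+2 = (j+1)+1 from rfl, nuqLevels_succ]; norm_num
  have ha : (0:ℝ) < 2^((j:ℤ)-(s:ℤ)) := by positivity
  have hr0 : 0 ≤ r := le_of_lt (lt_trans ha h1)
  have hdouble : (2:ℝ)^((j:ℤ)+1-(s:ℤ)) = 2 * 2^((j:ℤ)-(s:ℤ)) := by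
    rw [show (j:ℤ)+1-(s:ℤ) = ((j:ℤ)-(s:ℤ))+1 by ring, zpow_add_one₀ two_ne_zero]; ring
  rcases lt_or_eq_of_le h2 with h | h
  · have hk : levIdx (nuqLevels s) s r = j+1 :=
      levIdx_eq s (j+1) (by omega) (by rw [hlj1]; exact h1.le)
        (Or.inr (by rw [show j+1+1 = j+2 from rfl, hlj2]; exact h))
    rw [hk, show j+1+1 = j+2 from rfl, hlj1, hlj2, hdouble]
    exact le_min (by nlinarith [sq_nonneg (2*r - 3*(2^((j:ℤ)-(s:ℤ))))])
      (by nlinarith [sq_nonneg (r - 2^((j:ℤ)-(s:ℤ)))])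
  · rcases lt_or_eq_of_le (Nat.succ_le_of_lt hj) with hjs | hjs
    · have hk : levIdx (nuqLevels s) s r = j+2 :=
        levIdx_eq s (j+2) (by omega) (by rw [hlj2, h]) (Or.inr (by
          rw [h, ← hlj2]
          exact nuqLevels_strictMono s (lt_add_one (j+2))))
      rw [hk, hlj2, ← h]
      have hz : (r - r) * (nuqLevels s (j+2+1) - r) = 0 := by ring
      rw [hz]
      exact le_min (by positivity) (by positivity)
    · have hr1 : r = 1 := by
        rw [h, show (j:ℤ)+1-(s:ℤ) = 0 by omega]; norm_num
      have hls : nuqLevels s s ≤ r := by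
        obtain ⟨m, rfl⟩ := Nat.exists_eq_succ_of_ne_zero (by omega : s ≠ 0)
        rw [nuqLevels_succ, hr1]
        exact zpow_le_one_of_nonpos₀ one_le_two (by omega)
      have hk : levIdx (nuqLevels s) s r = s := levIdx_eq s s le_rfl hls (Or.inl rfl)
      rw [hk, nuqLevels_top, hr1]
      have hz : ((1:ℝ) - nuqLevels s s) * (1 - 1) = 0 := by ring
      rw [hz]
      exact le_min (by positivity) (by positivity)

lemma bin_cover : ∀ (s : ℕ) (r : ℝ), r ≤ 1 →
    r ≤ 2^(-(s:ℤ)) ∨ ∃ j < s, 2^((j:ℤ)-(s:ℤ)) < r ∧ r ≤ 2^((j:ℤ)+1-(s:ℤ)) := by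
  intro s
  induction s with
  | zero => intro r hr; left; simpa using hr
  | succ n ih =>
    intro r hr
    rcases le_or_gt r (2^(-((n:ℕ)+1:ℤ))) with h | h
    · left
      rw [show (-(((n:ℕ)+1:ℕ)):ℤ) = -((n:ℕ)+1:ℤ) by push_cast; ring]
      exact h
    · right
      rcases ih r hr with h2 | ⟨j, hj, hj1, hj2⟩
      · refine ⟨0, by omega, ?_, ?_⟩
        · rw [show ((0:ℕ):ℤ) - (((n:ℕ)+1:ℕ):ℤ) = -((n:ℤ)+1) by push_cast; ring]
          exact h
        · rw [show ((0:ℕ):ℤ) + 1 - (((n:ℕ)+1:ℕ):ℤ) = -(n:ℤ) by push_cast; ring]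
          exact h2
      · refine ⟨j+1, by omega, ?_, ?_⟩
        · rw [show ((j+1:ℕ):ℤ) - (((n:ℕ)+1:ℕ):ℤ) = (j:ℤ) - (n:ℤ) by push_cast; ring]
          exact hj1
        · rw [show ((j+1:ℕ):ℤ) + 1 - (((n:ℕ)+1:ℕ):ℤ) = (j:ℤ) + 1 - (n:ℤ) by push_cast; ring]
          exact hj2

lemma sum_r_le_sqrt {d : ℕ} (v : EuclideanSpace ℝ (Fin d)) (hv : v ≠ 0) (B : Finset (Fin d)) :
    ∑ i ∈ B, |v i| / ‖v‖ ≤ Real.sqrt B.card := by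
  have hnv : 0 < ‖v‖ := norm_pos_iff.mpr hv
  have hsum1 : ∑ i : Fin d, (|v i| / ‖v‖)^2 = 1 := by
    simp only [div_pow, sq_abs]
    rw [← Finset.sum_div, ← euclid_norm_sq v]
    exact div_self (by positivity)
  have h2 : ∑ i ∈ B, (|v i| / ‖v‖)^2 ≤ 1 := by
    rw [← hsum1]
    exact Finset.sum_le_sum_of_subset_of_nonneg (Finset.subset_univ B)
      (fun i _ _ => sq_nonneg _)
  rw [Real.le_sqrt (Finset.sum_nonneg (fun i _ => div_nonneg (abs_nonneg _) hnv.le))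
    (Nat.cast_nonneg _)]
  calc (∑ i ∈ B, |v i| / ‖v‖)^2 ≤ B.card * ∑ i ∈ B, (|v i| / ‖v‖)^2 :=
        sq_sum_le_card_mul_sum_sq
    _ ≤ B.card * 1 := by
        apply mul_le_mul_of_nonneg_left h2 (Nat.cast_nonneg _)
    _ = B.card := mul_one _

lemma integral_eq_sum_V (d s : ℕ) (v : EuclideanSpace ℝ (Fin d)) (hv : v ≠ 0) :
    (∫ u, ‖quant (nuqLevels s) s v u - v‖ ^ 2 ∂(unifCube d))
      = ‖v‖^2 * ∑ i, ((|v i| / ‖v‖ - nuqLevels s (levIdx (nuqLevels s) s (|v i| / ‖v‖)))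
          * (nuqLevels s (levIdx (nuqLevels s) s (|v i| / ‖v‖) + 1) - |v i| / ‖v‖)) := by
  have hpt : ∀ u : Fin d → ℝ, ‖quant (nuqLevels s) s v u - v‖^2
      = ∑ i, (quant (nuqLevels s) s v u i - v i)^2 := by
    intro u
    rw [EuclideanSpace.norm_eq, Real.sq_sqrt (by positivity)]
    simp [Real.norm_eq_abs, sq_abs]
  have hint : ∀ i : Fin d,
      Integrable (fun u => (quant (nuqLevels s) s v u i - v i)^2) (unifCube d) := by
    intro i
    have heq : (fun u : Fin d → ℝ => (quant (nuqLevels s) s v u i - v i)^2)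
        = fun u => if u i ≤ quantP (nuqLevels s) s (|v i| / ‖v‖)
            then (‖v‖ * Real.sign (v i) *
                nuqLevels s (levIdx (nuqLevels s) s (|v i| / ‖v‖) + 1) - v i)^2
            else (‖v‖ * Real.sign (v i) *
                nuqLevels s (levIdx (nuqLevels s) s (|v i| / ‖v‖)) - v i)^2 := by
      funext u
      simp only [quant]
      by_cases h : u i ≤ quantP (nuqLevels s) s (|v i| / ‖v‖) <;> simp [h]
    rw [heq]
    exact integrable_ite_eval d i _ _ _
  calc (∫ u, ‖quant (nuqLevels s) s v u - v‖ ^ 2 ∂(unifCube d))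
      = ∫ u, ∑ i, (quant (nuqLevels s) s v u i - v i)^2 ∂(unifCube d) := by
        exact integral_congr_ae (Filter.Eventually.of_forall hpt)
    _ = ∑ i, ∫ u, (quant (nuqLevels s) s v u i - v i)^2 ∂(unifCube d) :=
        integral_finset_sum _ (fun i _ => hint i)
    _ = ∑ i, ‖v‖^2 * ((|v i| / ‖v‖ - nuqLevels s (levIdx (nuqLevels s) s (|v i| / ‖v‖)))
          * (nuqLevels s (levIdx (nuqLevels s) s (|v i| / ‖v‖) + 1) - |v i| / ‖v‖)) :=
        Finset.sum_congr rfl (fun i _ => coord_integral s d v hv i)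
    _ = _ := (Finset.mul_sum _ _ _).symm

theorem nuq_variance_bound_bins' (d s : ℕ) (hd : 1 ≤ d) (hs : 1 ≤ s)
    (v : EuclideanSpace ℝ (Fin d)) (hv : v ≠ 0) :
    (∫ u, ‖quant (nuqLevels s) s v u - v‖ ^ 2 ∂(unifCube d)) ≤
      ‖v‖ ^ 2 *
        (min ((2:ℝ) ^ (-(2 * (s:ℤ))) *
                (({i : Fin d | |v i| / ‖v‖ ∈ Set.Icc 0 ((2:ℝ) ^ (-(s:ℤ)))}).ncard : ℝ) / 4)
             ((2:ℝ) ^ (-(s:ℤ)) *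
                Real.sqrt (({i : Fin d | |v i| / ‖v‖ ∈ Set.Icc 0 ((2:ℝ) ^ (-(s:ℤ)))}).ncard)) +
          ∑ j ∈ Finset.range s,
            min ((2:ℝ) ^ (2 * ((j:ℤ) - (s:ℤ))) *
                  (({i : Fin d | |v i| / ‖v‖ ∈
                      Set.Ioc ((2:ℝ) ^ ((j:ℤ) - (s:ℤ))) ((2:ℝ) ^ ((j:ℤ) + 1 - (s:ℤ)))}).ncard : ℝ)
                    / 4)
                ((2:ℝ) ^ ((j:ℤ) - (s:ℤ)) *
                  Real.sqrt (({i : Fin d | |v i| / ‖v‖ ∈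
                      Set.Ioc ((2:ℝ) ^ ((j:ℤ) - (s:ℤ)))
                        ((2:ℝ) ^ ((j:ℤ) + 1 - (s:ℤ)))}).ncard))) := by
  classical
  have hnv : 0 < ‖v‖ := norm_pos_iff.mpr hv
  have hr0 : ∀ i : Fin d, 0 ≤ |v i| / ‖v‖ := fun i => div_nonneg (abs_nonneg _) hnv.le
  have hr1 : ∀ i : Fin d, |v i| / ‖v‖ ≤ 1 := fun i => by
    rw [div_le_one hnv]; exact euclid_abs_le v i
  rw [integral_eq_sum_V d s v hv]
  apply mul_le_mul_of_nonneg_left _ (sq_nonneg ‖v‖)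
  set V : Fin d → ℝ := fun i =>
    ((|v i| / ‖v‖ - nuqLevels s (levIdx (nuqLevels s) s (|v i| / ‖v‖)))
      * (nuqLevels s (levIdx (nuqLevels s) s (|v i| / ‖v‖) + 1) - |v i| / ‖v‖)) with hVdef
  set B0 : Finset (Fin d) := Finset.univ.filter (fun i => |v i| / ‖v‖ ≤ 2^(-(s:ℤ)))
    with hB0def
  set B : ℕ → Finset (Fin d) := fun j => Finset.univ.filter
      (fun i => 2^((j:ℤ)-(s:ℤ)) < |v i| / ‖v‖ ∧ |v i| / ‖v‖ ≤ 2^((j:ℤ)+1-(s:ℤ)))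
    with hBdef
  have hmem0 : ∀ i : Fin d, i ∈ B0 ↔ |v i| / ‖v‖ ≤ 2^(-(s:ℤ)) := by
    intro i; rw [hB0def, Finset.mem_filter]; simp
  have hmemj : ∀ (j : ℕ) (i : Fin d), i ∈ B j ↔
      2^((j:ℤ)-(s:ℤ)) < |v i| / ‖v‖ ∧ |v i| / ‖v‖ ≤ 2^((j:ℤ)+1-(s:ℤ)) := by
    intro j i; rw [hBdef]; rw [Finset.mem_filter]; simp
  have hset0 : {i : Fin d | |v i| / ‖v‖ ∈ Set.Icc 0 ((2:ℝ)^(-(s:ℤ)))} = ↑B0 := by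
    ext i
    rw [Set.mem_setOf_eq, Set.mem_Icc, Finset.mem_coe, hmem0 i]
    exact ⟨fun h => h.2, fun h => ⟨hr0 i, h⟩⟩
  have hsetj : ∀ j : ℕ, {i : Fin d | |v i| / ‖v‖ ∈
      Set.Ioc ((2:ℝ)^((j:ℤ)-(s:ℤ))) ((2:ℝ)^((j:ℤ)+1-(s:ℤ)))} = ↑(B j) := by
    intro j; ext i
    rw [Set.mem_setOf_eq, Set.mem_Ioc, Finset.mem_coe, hmemj j i]
  simp only [hset0, hsetj, Set.ncard_coe_finset]
  -- partition
  have hWcover : (Finset.univ : Finset (Fin d))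
      = (Finset.range (s+1)).biUnion (fun t => if t = 0 then B0 else B (t-1)) := by
    ext i
    simp only [Finset.mem_univ, true_iff, Finset.mem_biUnion]
    rcases bin_cover s (|v i| / ‖v‖) (hr1 i) with h | ⟨j, hj, h1, h2⟩
    · refine ⟨0, Finset.mem_range.mpr (by omega), ?_⟩
      rw [if_pos rfl, hmem0 i]; exact h
    · refine ⟨j+1, Finset.mem_range.mpr (by omega), ?_⟩
      rw [if_neg (Nat.succ_ne_zero j), Nat.add_sub_cancel, hmemj j i]
      exact ⟨h1, h2⟩
  have key : ∀ a b : ℕ, a < b →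
      Disjoint (if a = 0 then B0 else B (a-1)) (if b = 0 then B0 else B (b-1)) := by
    intro a b hlt
    rw [Finset.disjoint_left]
    intro i hia hib
    obtain ⟨t, rfl⟩ := Nat.exists_eq_succ_of_ne_zero (by omega : b ≠ 0)
    rw [if_neg (Nat.succ_ne_zero t), Nat.succ_sub_one, hmemj t i] at hib
    rcases Nat.eq_zero_or_pos a with ha0 | ha0
    · subst ha0
      rw [if_pos rfl, hmem0 i] at hia
      have h3 : (2:ℝ)^(-(s:ℤ)) ≤ 2^((t:ℤ)-(s:ℤ)) :=
        zpow_le_zpow_right₀ one_le_two (by omega)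
      linarith [hia, hib.1]
    · obtain ⟨a', rfl⟩ := Nat.exists_eq_succ_of_ne_zero (by omega : a ≠ 0)
      rw [if_neg (Nat.succ_ne_zero a'), Nat.succ_sub_one, hmemj a' i] at hia
      have h3 : (2:ℝ)^((a':ℤ)+1-(s:ℤ)) ≤ 2^((t:ℤ)-(s:ℤ)) :=
        zpow_le_zpow_right₀ one_le_two (by omega)
      linarith [hia.2, hib.1]
  have hWdisj : (↑(Finset.range (s+1)) : Set ℕ).PairwiseDisjoint
      (fun t => if t = 0 then B0 else B (t-1)) := by
    intro a _ b _ hab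
    rcases lt_or_gt_of_ne hab with h | h
    · exact key a b h
    · exact (key b a h).symm
  have e1 : ∀ t : ℕ, (if (t+1:ℕ) = 0 then B0 else B (t+1-1)) = B t := fun t => by
    rw [if_neg (Nat.succ_ne_zero t), Nat.add_sub_cancel]
  have hsplit : ∑ i, V i = ∑ i ∈ B0, V i + ∑ t ∈ Finset.range s, ∑ i ∈ B t, V i := by
    rw [hWcover, Finset.sum_biUnion hWdisj, Finset.sum_range_succ', if_pos rfl]
    rw [Finset.sum_congr rfl (fun t _ => by rw [e1 t] :
      ∀ t ∈ Finset.range s, (∑ i ∈ (if (t+1:ℕ) = 0 then B0 else B (t+1-1)), V i)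
        = ∑ i ∈ B t, V i)]
    rw [add_comm]
  rw [hsplit]
  apply add_le_add
  · apply le_min
    · calc ∑ i ∈ B0, V i ≤ ∑ _i ∈ B0, (2^(-(s:ℤ))*2^(-(s:ℤ))/4) :=
            Finset.sum_le_sum (fun i hi =>
              ((V_le_bin0 hs (hr0 i) ((hmem0 i).mp hi)).trans (min_le_left _ _)))
        _ = B0.card * (2^(-(s:ℤ))*2^(-(s:ℤ))/4) := by
            rw [Finset.sum_const, nsmul_eq_mul]
        _ = 2^(-(2*(s:ℤ))) * B0.card / 4 := by
            rw [show -(2*(s:ℤ)) = -(s:ℤ) + -(s:ℤ) by ring,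
              zpow_add₀ (two_ne_zero : (2:ℝ) ≠ 0)]
            ring
    · calc ∑ i ∈ B0, V i ≤ ∑ i ∈ B0, 2^(-(s:ℤ)) * (|v i| / ‖v‖) :=
            Finset.sum_le_sum (fun i hi =>
              ((V_le_bin0 hs (hr0 i) ((hmem0 i).mp hi)).trans (min_le_right _ _)))
        _ = 2^(-(s:ℤ)) * ∑ i ∈ B0, |v i| / ‖v‖ := (Finset.mul_sum _ _ _).symm
        _ ≤ 2^(-(s:ℤ)) * Real.sqrt B0.card :=
            mul_le_mul_of_nonneg_left (sum_r_le_sqrt v hv B0) (by positivity)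
  · apply Finset.sum_le_sum
    intro j hj
    have hjs : j < s := Finset.mem_range.mp hj
    apply le_min
    · calc ∑ i ∈ B j, V i ≤ ∑ _i ∈ B j, (2^((j:ℤ)-(s:ℤ))*2^((j:ℤ)-(s:ℤ))/4) :=
            Finset.sum_le_sum (fun i hi =>
              ((V_le_bin hjs ((hmemj j i).mp hi).1 ((hmemj j i).mp hi).2).trans
                (min_le_left _ _)))
        _ = (B j).card * (2^((j:ℤ)-(s:ℤ))*2^((j:ℤ)-(s:ℤ))/4) := by
            rw [Finset.sum_const, nsmul_eq_mul]
        _ = 2^(2*((j:ℤ)-(s:ℤ))) * (B j).card / 4 := by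
            rw [show 2*((j:ℤ)-(s:ℤ)) = ((j:ℤ)-(s:ℤ)) + ((j:ℤ)-(s:ℤ)) by ring,
              zpow_add₀ (two_ne_zero : (2:ℝ) ≠ 0)]
            ring
    · calc ∑ i ∈ B j, V i ≤ ∑ i ∈ B j, 2^((j:ℤ)-(s:ℤ)) * (|v i| / ‖v‖) :=
            Finset.sum_le_sum (fun i hi =>
              ((V_le_bin hjs ((hmemj j i).mp hi).1 ((hmemj j i).mp hi).2).trans
                (min_le_right _ _)))
        _ = 2^((j:ℤ)-(s:ℤ)) * ∑ i ∈ B j, |v i| / ‖v‖ := (Finset.mul_sum _ _ _).symm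
        _ ≤ 2^((j:ℤ)-(s:ℤ)) * Real.sqrt (B j).card :=
            mul_le_mul_of_nonneg_left (sum_r_le_sqrt v hv (B j)) (by positivity)

/-- **Variance bound in terms of bin counts** (equation (29)): with the NUQSGD levels, letting
`d₀ = #{i : rᵢ ∈ [0, 2^{−s}]}` and `d_{j+1} = #{i : rᵢ ∈ (2^{j−s}, 2^{j+1−s}]}`,
`E[‖Q_s(v) − v‖²] ≤ ‖v‖² (min{2^{−2s}d₀/4, 2^{−s}√d₀}
  + Σ_{j=0}^{s−1} min{2^{2(j−s)}d_{j+1}/4, 2^{j−s}√d_{j+1}})`. -/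
theorem nuq_variance_bound_bins (d s : ℕ) (hd : 1 ≤ d) (hs : 1 ≤ s)
    (v : EuclideanSpace ℝ (Fin d)) (hv : v ≠ 0) :
    (∫ u, ‖quant (nuqLevels s) s v u - v‖ ^ 2 ∂(unifCube d)) ≤
      ‖v‖ ^ 2 *
        (min ((2:ℝ) ^ (-(2 * (s:ℤ))) *
                (({i : Fin d | |v i| / ‖v‖ ∈ Set.Icc 0 ((2:ℝ) ^ (-(s:ℤ)))}).ncard : ℝ) / 4)
             ((2:ℝ) ^ (-(s:ℤ)) *
                Real.sqrt (({i : Fin d | |v i| / ‖v‖ ∈ Set.Icc 0 ((2:ℝ) ^ (-(s:ℤ)))}).ncard)) +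
          ∑ j ∈ Finset.range s,
            min ((2:ℝ) ^ (2 * ((j:ℤ) - (s:ℤ))) *
                  (({i : Fin d | |v i| / ‖v‖ ∈
                      Set.Ioc ((2:ℝ) ^ ((j:ℤ) - (s:ℤ))) ((2:ℝ) ^ ((j:ℤ) + 1 - (s:ℤ)))}).ncard : ℝ)
                    / 4)
                ((2:ℝ) ^ ((j:ℤ) - (s:ℤ)) *
                  Real.sqrt (({i : Fin d | |v i| / ‖v‖ ∈
                      Set.Ioc ((2:ℝ) ^ ((j:ℤ) - (s:ℤ)))
                        ((2:ℝ) ^ ((j:ℤ) + 1 - (s:ℤ)))}).ncard))) :=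
  nuq_variance_bound_bins' d s hd hs v hv
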